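/- Murnaghan recurrence for characters: let λ, μ be partitions of n, let p be a part of μ, and μ∖p the partition obtained by deleting one part p from μ. Then χ^λ_μ = Σ_{k=1}^{ℓ(λ)} χ^{λ − p·ε_k}_{μ∖p}, where χ^{λ−p·ε_k} denotes the virtual character of S_{n−p} attached to the integer sequence (λ_1,…,λ_{k−1}, λ_k − p, λ_{k+1},…,λ_{ℓ(λ)}) via the Jacobi–Trudi determinant. -/

import Mathlib

open MvPolynomial

noncomputable def chiVirt (l : ℕ) (a : ℕ → ℤ) (mu : List ℕ) : ℤ :=
  if ∀ i : Fin l, 0 ≤ a ((i : ℕ) + 1) + ((l : ℤ) - 1 - (i : ℕ)) then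
    MvPolynomial.coeff
      (Finsupp.equivFunOnFinite.symm fun i : Fin l =>
        (a ((i : ℕ) + 1) + ((l : ℤ) - 1 - (i : ℕ))).toNat)
      ((∏ p ∈ Finset.univ.filter (fun p : Fin l × Fin l => p.1 < p.2),
          (MvPolynomial.X p.1 - MvPolynomial.X p.2 : MvPolynomial (Fin l) ℤ)) *
        (mu.map fun k => ∑ i : Fin l, (MvPolynomial.X i : MvPolynomial (Fin l) ℤ) ^ k).prod)
  else 0

lemma coeff_mul_sum_X_pow {l : ℕ} (F : MvPolynomial (Fin l) ℤ) (p : ℕ) (m : Fin l →₀ ℕ) :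
    MvPolynomial.coeff m (F * ∑ i : Fin l, (X i : MvPolynomial (Fin l) ℤ) ^ p) =
      ∑ i : Fin l, if Finsupp.single i p ≤ m then
        MvPolynomial.coeff (m - Finsupp.single i p) F else 0 := by
  rw [Finset.mul_sum, MvPolynomial.coeff_sum]
  refine Finset.sum_congr rfl fun i _ => ?_
  rw [X_pow_eq_monomial, coeff_mul_monomial']
  split <;> simp

theorem stmt_17 (n l : ℕ) (lam : ℕ → ℕ)
    (hmono : ∀ i j, 1 ≤ i → i ≤ j → j ≤ l → lam j ≤ lam i)
    (hpos : ∀ i, 1 ≤ i → i ≤ l → 1 ≤ lam i)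
    (hsum : ∑ i ∈ Finset.Icc 1 l, lam i = n)
    (mu : List ℕ) (hmu1 : ∀ x ∈ mu, 1 ≤ x) (hmusum : mu.sum = n)
    (p : ℕ) (hp : p ∈ mu) :
    chiVirt l (fun i => (lam i : ℤ)) mu =
      ∑ k ∈ Finset.Icc 1 l,
        chiVirt l (fun i => if i = k then (lam i : ℤ) - p else (lam i : ℤ)) (mu.erase p) := by
  classical
  set f : ℕ → MvPolynomial (Fin l) ℤ := fun k => ∑ i : Fin l, (X i) ^ k with hf
  set V : MvPolynomial (Fin l) ℤ :=
    ∏ q ∈ Finset.univ.filter (fun q : Fin l × Fin l => q.1 < q.2), (X q.1 - X q.2) with hV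
  set G : MvPolynomial (Fin l) ℤ := ((mu.erase p).map f).prod with hG
  set m : Fin l →₀ ℕ := Finsupp.equivFunOnFinite.symm fun i : Fin l =>
    ((lam ((i : ℕ) + 1) : ℤ) + ((l : ℤ) - 1 - (i : ℕ))).toNat with hm
  have hmval : ∀ i : Fin l, (m i : ℤ) = (lam ((i : ℕ) + 1) : ℤ) + ((l : ℤ) - 1 - (i : ℕ)) := by
    intro i
    have hi : (i : ℕ) < l := i.isLt
    simp only [hm, Finsupp.equivFunOnFinite_symm_apply_apply]
    omega
  have hguard : ∀ i : Fin l, 0 ≤ (fun i => (lam i : ℤ)) ((i : ℕ) + 1) + ((l : ℤ) - 1 - (i : ℕ)) := by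
    intro i; have hi : (i : ℕ) < l := i.isLt; simp only; omega
  have hperm : (mu.map f).prod = f p * G := by
    rw [hG, ← List.prod_cons, ← List.map_cons]
    exact List.Perm.prod_eq (List.Perm.map f (List.perm_cons_erase hp)).symm |>.symm
  rw [chiVirt, if_pos hguard]
  have hL : MvPolynomial.coeff m (V * (mu.map f).prod) =
      ∑ i : Fin l, if Finsupp.single i p ≤ m then
        MvPolynomial.coeff (m - Finsupp.single i p) (V * G) else 0 := by
    rw [hperm, show V * (f p * G) = (V * G) * f p by ring, hf]
    exact coeff_mul_sum_X_pow _ _ _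
  rw [show (Finsupp.equivFunOnFinite.symm fun i : Fin l =>
      ((fun i => (lam i : ℤ)) ((i : ℕ) + 1) + ((l : ℤ) - 1 - (i : ℕ))).toNat) = m from rfl]
  rw [hL]
  -- reindex RHS
  rw [← Finset.Ico_add_one_right_eq_Icc, Finset.sum_Ico_eq_sum_range, Nat.add_sub_cancel]

  rw [← Fin.sum_univ_eq_sum_range (fun k =>
    chiVirt l (fun i => if i = 1 + k then (lam i : ℤ) - p else (lam i : ℤ)) (mu.erase p)) l]
  refine Finset.sum_congr rfl fun i _ => ?_
  set j := (i : ℕ) with hji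
  have hjl : j < l := i.isLt
  have hi : (i : ℕ) = j := rfl
  have hcond : (Finsupp.single i p ≤ m) ↔
      (0 ≤ (lam (j + 1) : ℤ) - p + ((l : ℤ) - 1 - j)) := by
    rw [Finsupp.single_le_iff]
    have := hmval i
    simp only [hi] at this ⊢
    omega
  by_cases hc : Finsupp.single i p ≤ m
  · rw [if_pos hc, chiVirt, if_pos]
    · congr 1
      ext k
      have hkm := hmval k
      simp only [Finsupp.coe_tsub, Pi.sub_apply, Finsupp.single_apply,
        Finsupp.equivFunOnFinite_symm_apply_apply]
      by_cases hk : k = i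
      · subst hk
        simp only [if_pos rfl, hi]
        rw [if_pos (by simp [hi])]
        have := hcond.mp hc
        simp only [hi] at hkm
        omega
      · have hne : (k : ℕ) + 1 ≠ 1 + j := by
          intro h; apply hk; exact Fin.ext (by omega)
        rw [if_neg hne, if_neg (by exact fun h => hk (by exact h ▸ rfl))]
        omega
    · intro k
      by_cases hk : (k : ℕ) + 1 = 1 + j
      · simp only [if_pos hk]
        have hkj : (k : ℕ) = j := by omega
        rw [hkj]
        have := hcond.mp hc
        omega
      · simp only [if_neg hk]
        have := hguard k
        simpa using this
  · rw [if_neg hc, chiVirt, if_neg]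
    intro hall
    apply hc
    rw [hcond]
    have := hall i
    simp only [hi, if_pos (by omega : (j:ℕ) + 1 = 1 + j)] at this
    omega
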